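/- Let α > −1/2 be real. For z ∈ ℂ∖(−∞,0] define, with principal branches of all fractional powers, w(z) = ((z+1)^{1/2}+1)/((z+1)^{1/2}−1) and the 2×2 matrix P^{(∞)}_α(z) = E · diag((z+1)^{−1/4}, (z+1)^{1/4}) · V · diag(w(z)^{−α}, w(z)^{α}), where E = [[1,0],[2αi,1]] and V = (1/√2)[[1,i],[i,1]]. Then for every x ∈ (−1,0) the one-sided limits P_{±}(x) = lim_{ε→0+} P^{(∞)}_α(x ± iε) exist and satisfy P_{+}(x) = P_{−}(x) · diag(e^{2απi}, e^{−2απi}); and for every x ∈ (−∞,−1) the one-sided limits exist and satisfy P_{+}(x) = P_{−}(x) · [[0,1],[−1,0]]. -/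

import Mathlib

open Complex Matrix Filter Topology

/-- `V = (1/√2)[[1, i], [i, 1]]`. -/
noncomputable def Vmat : Matrix (Fin 2) (Fin 2) ℂ :=
  ((Real.sqrt 2 : ℂ))⁻¹ • !![1, I; I, 1]

/-- `w(z) = ((z+1)^{1/2}+1)/((z+1)^{1/2}−1)`, principal branch. -/
noncomputable def wFun (z : ℂ) : ℂ :=
  ((z + 1) ^ ((1 : ℂ) / 2) + 1) / ((z + 1) ^ ((1 : ℂ) / 2) - 1)

/-- The global parametrix
`P^{(∞)}_α(z) = E · diag((z+1)^{−1/4}, (z+1)^{1/4}) · V · diag(w(z)^{−α}, w(z)^{α})`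
with `E = [[1,0],[2αi,1]]`, principal branches. -/
noncomputable def Pinf (α : ℝ) (z : ℂ) : Matrix (Fin 2) (Fin 2) ℂ :=
  !![1, 0; 2 * (α : ℂ) * I, 1] *
  !![(z + 1) ^ (-(1 : ℂ) / 4), 0; 0, (z + 1) ^ ((1 : ℂ) / 4)] *
  Vmat *
  !![wFun z ^ (-(α : ℂ)), 0; 0, wFun z ^ ((α : ℂ))]

/- ### Auxiliary lemmas -/

private lemma arg_pos_of_im_pos {z : ℂ} (hz : 0 < z.im) : 0 < z.arg := by
  have hz0 : z ≠ 0 := fun h => by simp [h] at hz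
  by_contra h
  push_neg at h
  have h1 := Real.sin_nonpos_of_nonpos_of_neg_pi_le h (le_of_lt (Complex.neg_pi_lt_arg z))
  rw [Complex.sin_arg] at h1
  have h2 : 0 < z.im / ‖z‖ := div_pos hz (norm_pos_iff.mpr hz0)
  linarith

private lemma arg_neg_of_im_neg {z : ℂ} (hz : z.im < 0) : z.arg < 0 := by
  have hz0 : z ≠ 0 := fun h => by simp [h] at hz
  by_contra h
  push_neg at h
  have h1 := Real.sin_nonneg_of_nonneg_of_le_pi h (Complex.arg_le_pi z)
  rw [Complex.sin_arg] at h1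
  have h2 : z.im / ‖z‖ < 0 := div_neg_of_neg_of_pos hz (norm_pos_iff.mpr hz0)
  linarith

private lemma im_sqrt_pos {z : ℂ} (hz : 0 < z.im) : 0 < (z ^ ((1:ℂ)/2)).im := by
  have hz0 : z ≠ 0 := fun h => by simp [h] at hz
  rw [Complex.cpow_def_of_ne_zero hz0, Complex.exp_im]
  have h1 : (Complex.log z * ((1:ℂ)/2)).im = z.arg / 2 := by
    simp [Complex.mul_im, Complex.log_im]
    ring
  rw [h1]
  have harg := arg_pos_of_im_pos hz
  have harg2 := Complex.arg_le_pi z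
  have hpi := Real.pi_pos
  exact mul_pos (Real.exp_pos _) (Real.sin_pos_of_pos_of_lt_pi (by linarith) (by linarith))

private lemma im_sqrt_neg {z : ℂ} (hz : z.im < 0) : (z ^ ((1:ℂ)/2)).im < 0 := by
  have hz0 : z ≠ 0 := fun h => by simp [h] at hz
  rw [Complex.cpow_def_of_ne_zero hz0, Complex.exp_im]
  have h1 : (Complex.log z * ((1:ℂ)/2)).im = z.arg / 2 := by
    simp [Complex.mul_im, Complex.log_im]
    ring
  rw [h1]
  have harg := arg_neg_of_im_neg hz
  have harg2 := Complex.neg_pi_lt_arg z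
  have hpi := Real.pi_pos
  exact mul_neg_of_pos_of_neg (Real.exp_pos _)
    (Real.sin_neg_of_neg_of_neg_pi_lt (by linarith) (by linarith))

private lemma im_ratio (s : ℂ) :
    ((s + 1) / (s - 1)).im = -2 * s.im / Complex.normSq (s - 1) := by
  rw [Complex.div_im, div_sub_div_same]
  congr 1
  simp
  ring

private lemma tendsto_cpow_lower {f : ℝ → ℂ} {r : ℝ} (hr : r < 0) (a : ℂ)
    (hf : Tendsto f (𝓝[>] (0:ℝ)) (𝓝 (r:ℂ))) (him : ∀ᶠ (ε : ℝ) in 𝓝[>] (0:ℝ), (f ε).im < 0) :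
    Tendsto (fun ε => f ε ^ a) (𝓝[>] (0:ℝ))
      (𝓝 (Complex.exp (((Real.log (-r) : ℂ) - (Real.pi : ℂ) * I) * a))) := by
  have h1 : Tendsto f (𝓝[>] (0:ℝ)) (𝓝[{z : ℂ | z.im < 0}] (r:ℂ)) :=
    tendsto_nhdsWithin_iff.2 ⟨hf, him⟩
  have h2 := (Complex.tendsto_log_nhdsWithin_im_neg_of_re_neg_of_im_zero
      (show ((r:ℂ)).re < 0 by simpa using hr) (by simp)).comp h1
  have habs : ‖(r:ℂ)‖ = -r := by simp [abs_of_neg hr]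
  rw [habs] at h2
  have h3 : Tendsto (fun ε => Complex.exp (Complex.log (f ε) * a)) (𝓝[>] (0:ℝ))
      (𝓝 (Complex.exp (((Real.log (-r) : ℂ) - (Real.pi : ℂ) * I) * a))) :=
    (Complex.continuous_exp.tendsto _).comp (h2.mul_const a)
  refine h3.congr' (him.mono fun ε hε => ?_)
  exact (Complex.cpow_def_of_ne_zero (fun h0 => by rw [h0] at hε; simp at hε) a).symm

private lemma tendsto_cpow_upper {f : ℝ → ℂ} {r : ℝ} (hr : r < 0) (a : ℂ)
    (hf : Tendsto f (𝓝[>] (0:ℝ)) (𝓝 (r:ℂ))) (him : ∀ᶠ (ε : ℝ) in 𝓝[>] (0:ℝ), 0 < (f ε).im) :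
    Tendsto (fun ε => f ε ^ a) (𝓝[>] (0:ℝ))
      (𝓝 (Complex.exp (((Real.log (-r) : ℂ) + (Real.pi : ℂ) * I) * a))) := by
  have h1 : Tendsto f (𝓝[>] (0:ℝ)) (𝓝[{z : ℂ | 0 ≤ z.im}] (r:ℂ)) :=
    tendsto_nhdsWithin_iff.2 ⟨hf, him.mono fun ε hε => le_of_lt hε⟩
  have h2 := (Complex.tendsto_log_nhdsWithin_im_nonneg_of_re_neg_of_im_zero
      (show ((r:ℂ)).re < 0 by simpa using hr) (by simp)).comp h1
  have habs : ‖(r:ℂ)‖ = -r := by simp [abs_of_neg hr]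
  rw [habs] at h2
  have h3 : Tendsto (fun ε => Complex.exp (Complex.log (f ε) * a)) (𝓝[>] (0:ℝ))
      (𝓝 (Complex.exp (((Real.log (-r) : ℂ) + (Real.pi : ℂ) * I) * a))) :=
    (Complex.continuous_exp.tendsto _).comp (h2.mul_const a)
  refine h3.congr' (him.mono fun ε hε => ?_)
  exact (Complex.cpow_def_of_ne_zero (fun h0 => by rw [h0] at hε; simp at hε) a).symm

private lemma tendsto_diag {l : Filter ℝ} {f g : ℝ → ℂ} {a b : ℂ}
    (hf : Tendsto f l (𝓝 a)) (hg : Tendsto g l (𝓝 b)) :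
    Tendsto (fun ε => (!![f ε, 0; 0, g ε] : Matrix (Fin 2) (Fin 2) ℂ)) l (𝓝 !![a, 0; 0, b]) := by
  refine tendsto_pi_nhds.2 fun i => tendsto_pi_nhds.2 fun j => ?_
  fin_cases i <;> fin_cases j <;> simp
  exacts [hf, tendsto_const_nhds, tendsto_const_nhds, hg]

private lemma diag_mul (a b c d : ℂ) :
    (!![a, 0; 0, b] : Matrix (Fin 2) (Fin 2) ℂ) * !![c, 0; 0, d] = !![a * c, 0; 0, b * d] := by
  ext i j
  fin_cases i <;> fin_cases j <;> simp [Matrix.mul_apply, Fin.sum_univ_two]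

private lemma key2 (e d1 d2 ω ν : ℂ) :
    !![(1:ℂ), 0; e, 1] * !![-I * d1, 0; 0, I * d2] * Vmat * !![ν, 0; 0, ω] =
    !![(1:ℂ), 0; e, 1] * !![d1, 0; 0, d2] * Vmat * !![ω, 0; 0, ν] * !![0, 1; -1, 0] := by
  ext i j
  fin_cases i <;> fin_cases j <;>
    · simp [Vmat, Matrix.mul_apply, Fin.sum_univ_two, ← sub_eq_zero]
      ring_nf
      try simp only [Complex.I_sq]
      try ring_nf

private lemma tendsto_path_add (x : ℝ) :
    Tendsto (fun ε : ℝ => (x:ℂ) + (ε:ℂ) * I + 1) (𝓝[>] 0) (𝓝 ((x:ℂ) + 1)) := by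
  have h : Continuous fun ε : ℝ => (x:ℂ) + (ε:ℂ) * I + 1 :=
    (continuous_const.add (Complex.continuous_ofReal.mul continuous_const)).add continuous_const
  have h2 := (h.tendsto 0).mono_left (nhdsWithin_le_nhds : 𝓝[>] (0:ℝ) ≤ 𝓝 0)
  simpa using h2

private lemma tendsto_path_sub (x : ℝ) :
    Tendsto (fun ε : ℝ => (x:ℂ) - (ε:ℂ) * I + 1) (𝓝[>] 0) (𝓝 ((x:ℂ) + 1)) := by
  have h : Continuous fun ε : ℝ => (x:ℂ) - (ε:ℂ) * I + 1 :=
    (continuous_const.sub (Complex.continuous_ofReal.mul continuous_const)).add continuous_const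
  have h2 := (h.tendsto 0).mono_left (nhdsWithin_le_nhds : 𝓝[>] (0:ℝ) ≤ 𝓝 0)
  simpa using h2

/-- `P^{(∞)}_α` has boundary values on `(−1, 0)` and `(−∞, −1)` from above and below,
with jumps `diag(e^{2απi}, e^{−2απi})` and `[[0,1],[−1,0]]` respectively. -/
theorem stmt9 (α : ℝ) (hα : -1 / 2 < α) :
    (∀ x : ℝ, x ∈ Set.Ioo (-1 : ℝ) 0 →
      ∃ Pp Pm : Matrix (Fin 2) (Fin 2) ℂ,
        Tendsto (fun ε : ℝ => Pinf α ((x : ℂ) + (ε : ℂ) * I))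
          (𝓝[>] 0) (𝓝 Pp) ∧
        Tendsto (fun ε : ℝ => Pinf α ((x : ℂ) - (ε : ℂ) * I))
          (𝓝[>] 0) (𝓝 Pm) ∧
        Pp = Pm * !![Complex.exp (2 * (α : ℂ) * (Real.pi : ℂ) * I), 0;
                     0, Complex.exp (-(2 * (α : ℂ) * (Real.pi : ℂ) * I))]) ∧
    (∀ x : ℝ, x < -1 →
      ∃ Pp Pm : Matrix (Fin 2) (Fin 2) ℂ,
        Tendsto (fun ε : ℝ => Pinf α ((x : ℂ) + (ε : ℂ) * I))
          (𝓝[>] 0) (𝓝 Pp) ∧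
        Tendsto (fun ε : ℝ => Pinf α ((x : ℂ) - (ε : ℂ) * I))
          (𝓝[>] 0) (𝓝 Pm) ∧
        Pp = Pm * !![0, 1; -1, 0]) := by
  constructor
  · -- Case 1 : x ∈ (-1, 0)
    rintro x ⟨hx1, hx0⟩
    -- basic real quantities
    set s : ℝ := Real.sqrt (x + 1) with hs_def
    have hs0 : 0 < s := Real.sqrt_pos.2 (by linarith)
    have hs1 : s < 1 := by
      rw [show (1:ℝ) = Real.sqrt 1 by simp]
      exact Real.sqrt_lt_sqrt (by linarith) (by linarith)
    set r : ℝ := (s + 1) / (s - 1) with hr_def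
    have hr : r < 0 := div_neg_of_pos_of_neg (by linarith) (by linarith)
    -- the square root at the limit point
    have hsC : ((x:ℂ) + 1) ^ ((1:ℂ)/2) = (s:ℂ) := by
      rw [show ((x:ℂ) + 1) = ((x + 1 : ℝ) : ℂ) by push_cast; ring,
        show ((1:ℂ)/2) = (((1:ℝ)/2 : ℝ) : ℂ) by norm_num,
        ← Complex.ofReal_cpow (by linarith : (0:ℝ) ≤ x + 1)]
      rw [hs_def, Real.sqrt_eq_rpow]
    -- slit plane membership of x+1
    have hslit : ((x:ℂ) + 1) ∈ Complex.slitPlane :=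
      Complex.mem_slitPlane_iff.2 (Or.inl (by simp; linarith))
    -- limits of the diagonal (z+1)-powers (same from above and below)
    have hdP : ∀ c : ℂ, Tendsto (fun ε : ℝ => ((x:ℂ) + (ε:ℂ) * I + 1) ^ c) (𝓝[>] 0)
        (𝓝 (((x:ℂ) + 1) ^ c)) := fun c =>
      (continuousAt_cpow_const hslit).tendsto.comp (tendsto_path_add x)
    have hdM : ∀ c : ℂ, Tendsto (fun ε : ℝ => ((x:ℂ) - (ε:ℂ) * I + 1) ^ c) (𝓝[>] 0)
        (𝓝 (((x:ℂ) + 1) ^ c)) := fun c =>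
      (continuousAt_cpow_const hslit).tendsto.comp (tendsto_path_sub x)
    -- limit of wFun along both paths
    have hrC : ((s:ℂ) + 1) / ((s:ℂ) - 1) = (r:ℂ) := by rw [hr_def]; push_cast; ring
    have hne : (s:ℂ) - 1 ≠ 0 := by
      rw [sub_ne_zero]
      exact_mod_cast hs1.ne
    have hwP : Tendsto (fun ε : ℝ => wFun ((x:ℂ) + (ε:ℂ) * I)) (𝓝[>] 0) (𝓝 (r:ℂ)) := by
      rw [← hrC]
      have h12 := hdP ((1:ℂ)/2)
      rw [hsC] at h12
      exact (h12.add tendsto_const_nhds).div (h12.sub tendsto_const_nhds) hne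
    have hwM : Tendsto (fun ε : ℝ => wFun ((x:ℂ) - (ε:ℂ) * I)) (𝓝[>] 0) (𝓝 (r:ℂ)) := by
      rw [← hrC]
      have h12 := hdM ((1:ℂ)/2)
      rw [hsC] at h12
      exact (h12.add tendsto_const_nhds).div (h12.sub tendsto_const_nhds) hne
    -- imaginary parts of wFun along the paths
    have himP : ∀ᶠ (ε : ℝ) in 𝓝[>] (0:ℝ), (wFun ((x:ℂ) + (ε:ℂ) * I)).im < 0 := by
      filter_upwards [self_mem_nhdsWithin] with ε hε
      have hzim : (((x:ℂ) + (ε:ℂ) * I) + 1).im = ε := by simp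
      have h1 : 0 < ((((x:ℂ) + (ε:ℂ) * I) + 1) ^ ((1:ℂ)/2)).im :=
        im_sqrt_pos (by rw [hzim]; exact hε)
      rw [wFun, im_ratio]
      refine div_neg_of_neg_of_pos (by linarith) (Complex.normSq_pos.2 ?_)
      rw [sub_ne_zero]
      intro h
      rw [h] at h1
      simp at h1
    have himM : ∀ᶠ (ε : ℝ) in 𝓝[>] (0:ℝ), 0 < (wFun ((x:ℂ) - (ε:ℂ) * I)).im := by
      filter_upwards [self_mem_nhdsWithin] with ε hε
      have hzim : (((x:ℂ) - (ε:ℂ) * I) + 1).im = -ε := by simp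
      have h1 : ((((x:ℂ) - (ε:ℂ) * I) + 1) ^ ((1:ℂ)/2)).im < 0 :=
        im_sqrt_neg (by rw [hzim]; simpa using hε)
      rw [wFun, im_ratio]
      refine div_pos (by linarith) (Complex.normSq_pos.2 ?_)
      rw [sub_ne_zero]
      intro h
      rw [h] at h1
      simp at h1
    -- limits of the w-powers
    have hwaP : ∀ a : ℂ, Tendsto (fun ε : ℝ => wFun ((x:ℂ) + (ε:ℂ) * I) ^ a) (𝓝[>] 0)
        (𝓝 (Complex.exp (((Real.log (-r) : ℂ) - (Real.pi : ℂ) * I) * a))) := fun a =>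
      tendsto_cpow_lower hr a hwP himP
    have hwaM : ∀ a : ℂ, Tendsto (fun ε : ℝ => wFun ((x:ℂ) - (ε:ℂ) * I) ^ a) (𝓝[>] 0)
        (𝓝 (Complex.exp (((Real.log (-r) : ℂ) + (Real.pi : ℂ) * I) * a))) := fun a =>
      tendsto_cpow_upper hr a hwM himM
    -- assemble
    refine ⟨!![1, 0; 2 * (α : ℂ) * I, 1] *
        !![((x:ℂ) + 1) ^ (-(1:ℂ)/4), 0; 0, ((x:ℂ) + 1) ^ ((1:ℂ)/4)] * Vmat *
        !![Complex.exp (((Real.log (-r) : ℂ) - (Real.pi : ℂ) * I) * (-(α:ℂ))), 0;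
           0, Complex.exp (((Real.log (-r) : ℂ) - (Real.pi : ℂ) * I) * ((α:ℂ)))],
      !![1, 0; 2 * (α : ℂ) * I, 1] *
        !![((x:ℂ) + 1) ^ (-(1:ℂ)/4), 0; 0, ((x:ℂ) + 1) ^ ((1:ℂ)/4)] * Vmat *
        !![Complex.exp (((Real.log (-r) : ℂ) + (Real.pi : ℂ) * I) * (-(α:ℂ))), 0;
           0, Complex.exp (((Real.log (-r) : ℂ) + (Real.pi : ℂ) * I) * ((α:ℂ)))], ?_, ?_, ?_⟩
    · simp only [Pinf]
      exact ((tendsto_const_nhds.mul (tendsto_diag (hdP _) (hdP _))).mul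
        tendsto_const_nhds).mul (tendsto_diag (hwaP _) (hwaP _))
    · simp only [Pinf]
      exact ((tendsto_const_nhds.mul (tendsto_diag (hdM _) (hdM _))).mul
        tendsto_const_nhds).mul (tendsto_diag (hwaM _) (hwaM _))
    · have e1 : Complex.exp (((Real.log (-r) : ℂ) + (Real.pi : ℂ) * I) * (-(α:ℂ))) *
          Complex.exp (2 * (α : ℂ) * (Real.pi : ℂ) * I)
          = Complex.exp (((Real.log (-r) : ℂ) - (Real.pi : ℂ) * I) * (-(α:ℂ))) := by
        rw [← Complex.exp_add]; congr 1; ring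
      have e2 : Complex.exp (((Real.log (-r) : ℂ) + (Real.pi : ℂ) * I) * ((α:ℂ))) *
          Complex.exp (-(2 * (α : ℂ) * (Real.pi : ℂ) * I))
          = Complex.exp (((Real.log (-r) : ℂ) - (Real.pi : ℂ) * I) * ((α:ℂ))) := by
        rw [← Complex.exp_add]; congr 1; ring
      have hW : (!![Complex.exp (((Real.log (-r) : ℂ) - (Real.pi : ℂ) * I) * (-(α:ℂ))), 0;
            0, Complex.exp (((Real.log (-r) : ℂ) - (Real.pi : ℂ) * I) * ((α:ℂ)))] :
            Matrix (Fin 2) (Fin 2) ℂ)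
          = !![Complex.exp (((Real.log (-r) : ℂ) + (Real.pi : ℂ) * I) * (-(α:ℂ))), 0;
            0, Complex.exp (((Real.log (-r) : ℂ) + (Real.pi : ℂ) * I) * ((α:ℂ)))] *
            !![Complex.exp (2 * (α : ℂ) * (Real.pi : ℂ) * I), 0;
               0, Complex.exp (-(2 * (α : ℂ) * (Real.pi : ℂ) * I))] := by
        rw [diag_mul, e1, e2]
      conv_lhs => rw [hW]
      rw [← Matrix.mul_assoc]
  · -- Case 2 : x < -1
    intro x hx
    have hx1 : x + 1 < 0 := by linarith
    set R : ℝ := Real.log (-(x + 1)) with hR_def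
    set t : ℝ := Real.sqrt (-(x + 1)) with ht_def
    have ht : 0 < t := Real.sqrt_pos.2 (by linarith)
    -- path tendsto to (x+1) as a coerced real
    have hpathP : Tendsto (fun ε : ℝ => (x:ℂ) + (ε:ℂ) * I + 1) (𝓝[>] 0)
        (𝓝 (((x + 1 : ℝ) : ℂ))) := by
      have := tendsto_path_add x
      rwa [show ((x:ℂ) + 1) = ((x + 1 : ℝ) : ℂ) by push_cast; ring] at this
    have hpathM : Tendsto (fun ε : ℝ => (x:ℂ) - (ε:ℂ) * I + 1) (𝓝[>] 0)
        (𝓝 (((x + 1 : ℝ) : ℂ))) := by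
      have := tendsto_path_sub x
      rwa [show ((x:ℂ) + 1) = ((x + 1 : ℝ) : ℂ) by push_cast; ring] at this
    have himpP : ∀ᶠ (ε : ℝ) in 𝓝[>] (0:ℝ), 0 < ((x:ℂ) + (ε:ℂ) * I + 1).im := by
      filter_upwards [self_mem_nhdsWithin] with ε hε
      simpa using (hε : (0:ℝ) < ε)
    have himpM : ∀ᶠ (ε : ℝ) in 𝓝[>] (0:ℝ), ((x:ℂ) - (ε:ℂ) * I + 1).im < 0 := by
      filter_upwards [self_mem_nhdsWithin] with ε hε
      simpa using (hε : (0:ℝ) < ε)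
    -- limits of (z+1)-powers
    have hdP : ∀ a : ℂ, Tendsto (fun ε : ℝ => ((x:ℂ) + (ε:ℂ) * I + 1) ^ a) (𝓝[>] 0)
        (𝓝 (Complex.exp (((R : ℂ) + (Real.pi : ℂ) * I) * a))) := fun a => by
      have := tendsto_cpow_upper hx1 a hpathP himpP
      rwa [show Real.log (-(x+1)) = R from rfl] at this
    have hdM : ∀ a : ℂ, Tendsto (fun ε : ℝ => ((x:ℂ) - (ε:ℂ) * I + 1) ^ a) (𝓝[>] 0)
        (𝓝 (Complex.exp (((R : ℂ) - (Real.pi : ℂ) * I) * a))) := fun a => by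
      have := tendsto_cpow_lower hx1 a hpathM himpM
      rwa [show Real.log (-(x+1)) = R from rfl] at this
    -- identify the limit square roots
    have hexp_half : Real.exp (R / 2) = t := by
      rw [hR_def, ← Real.log_sqrt (by linarith : (0:ℝ) ≤ -(x+1)), Real.exp_log ht]
    have hI : Complex.exp ((Real.pi : ℂ) / 2 * I) = I := by
      rw [Complex.exp_mul_I]
      simp
    have hmI : Complex.exp (-((Real.pi : ℂ) / 2 * I)) = -I := by
      rw [Complex.exp_neg, hI, Complex.inv_I]
    have hsP : Complex.exp (((R : ℂ) + (Real.pi : ℂ) * I) * ((1:ℂ)/2)) = (t:ℂ) * I := by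
      rw [show ((R : ℂ) + (Real.pi : ℂ) * I) * ((1:ℂ)/2)
          = ((R/2 : ℝ) : ℂ) + (Real.pi : ℂ) / 2 * I by push_cast; ring,
        Complex.exp_add, hI, ← Complex.ofReal_exp, hexp_half]
    have hsM : Complex.exp (((R : ℂ) - (Real.pi : ℂ) * I) * ((1:ℂ)/2)) = -((t:ℂ) * I) := by
      rw [show ((R : ℂ) - (Real.pi : ℂ) * I) * ((1:ℂ)/2)
          = ((R/2 : ℝ) : ℂ) + -((Real.pi : ℂ) / 2 * I) by push_cast; ring,
        Complex.exp_add, hmI, ← Complex.ofReal_exp, hexp_half]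
      ring
    -- the two boundary values of w
    set wp : ℂ := ((t:ℂ) * I + 1) / ((t:ℂ) * I - 1) with hwp_def
    set wm : ℂ := (-((t:ℂ) * I) + 1) / (-((t:ℂ) * I) - 1) with hwm_def
    have hneP : (t:ℂ) * I - 1 ≠ 0 := by
      intro h
      have := congrArg Complex.re h
      simp at this
    have hneM : -((t:ℂ) * I) - 1 ≠ 0 := by
      intro h
      have := congrArg Complex.re h
      simp at this
    have hwP : Tendsto (fun ε : ℝ => wFun ((x:ℂ) + (ε:ℂ) * I)) (𝓝[>] 0) (𝓝 wp) := by
      have h12 := hdP ((1:ℂ)/2)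
      rw [hsP] at h12
      exact (h12.add tendsto_const_nhds).div (h12.sub tendsto_const_nhds) hneP
    have hwM : Tendsto (fun ε : ℝ => wFun ((x:ℂ) - (ε:ℂ) * I)) (𝓝[>] 0) (𝓝 wm) := by
      have h12 := hdM ((1:ℂ)/2)
      rw [hsM] at h12
      exact (h12.add tendsto_const_nhds).div (h12.sub tendsto_const_nhds) hneM
    -- imaginary parts of the boundary values
    have himwP : wp.im < 0 := by
      rw [hwp_def, im_ratio]
      refine div_neg_of_neg_of_pos ?_ (Complex.normSq_pos.2 (by rwa [sub_ne_zero] at hneP ⊢))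
      simp
      linarith
    have himwM : 0 < wm.im := by
      rw [hwm_def, im_ratio]
      refine div_pos ?_ (Complex.normSq_pos.2 (by rwa [sub_ne_zero] at hneM ⊢))
      simp
      linarith
    have hslitP : wp ∈ Complex.slitPlane := Complex.mem_slitPlane_iff.2 (Or.inr himwP.ne)
    have hslitM : wm ∈ Complex.slitPlane := Complex.mem_slitPlane_iff.2 (Or.inr himwM.ne')
    -- limits of the w-powers
    have hwaP : ∀ a : ℂ, Tendsto (fun ε : ℝ => wFun ((x:ℂ) + (ε:ℂ) * I) ^ a) (𝓝[>] 0)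
        (𝓝 (wp ^ a)) := fun a => (continuousAt_cpow_const hslitP).tendsto.comp hwP
    have hwaM : ∀ a : ℂ, Tendsto (fun ε : ℝ => wFun ((x:ℂ) - (ε:ℂ) * I) ^ a) (𝓝[>] 0)
        (𝓝 (wm ^ a)) := fun a => (continuousAt_cpow_const hslitM).tendsto.comp hwM
    -- algebraic relations between the boundary values
    have hprod : wm * wp = 1 := by
      rw [hwp_def, hwm_def, div_mul_div_comm, div_eq_one_iff_eq (mul_ne_zero hneM hneP)]
      ring_nf
      try simp only [Complex.I_sq]
      try ring
    have hinv : wm = wp⁻¹ := eq_inv_of_mul_eq_one_left hprod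
    have harg : wp.arg ≠ Real.pi := fun h => himwP.ne (Complex.arg_eq_pi_iff.1 h).2
    have hswap1 : wm ^ ((α:ℂ)) = wp ^ (-(α:ℂ)) := by
      rw [hinv, Complex.inv_cpow _ _ harg, ← Complex.cpow_neg]
    have hswap2 : wm ^ (-(α:ℂ)) = wp ^ ((α:ℂ)) := by
      rw [hinv, Complex.inv_cpow _ _ harg, Complex.cpow_neg, inv_inv]
    -- relations between the diagonal powers
    have hed1 : Complex.exp (((R : ℂ) + (Real.pi : ℂ) * I) * (-(1:ℂ)/4))
        = -I * Complex.exp (((R : ℂ) - (Real.pi : ℂ) * I) * (-(1:ℂ)/4)) := by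
      rw [show ((R : ℂ) + (Real.pi : ℂ) * I) * (-(1:ℂ)/4)
          = ((R : ℂ) - (Real.pi : ℂ) * I) * (-(1:ℂ)/4) + -((Real.pi : ℂ)/2 * I) by ring,
        Complex.exp_add, hmI, mul_comm]
    have hed2 : Complex.exp (((R : ℂ) + (Real.pi : ℂ) * I) * ((1:ℂ)/4))
        = I * Complex.exp (((R : ℂ) - (Real.pi : ℂ) * I) * ((1:ℂ)/4)) := by
      rw [show ((R : ℂ) + (Real.pi : ℂ) * I) * ((1:ℂ)/4)
          = ((R : ℂ) - (Real.pi : ℂ) * I) * ((1:ℂ)/4) + (Real.pi : ℂ)/2 * I by ring,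
        Complex.exp_add, hI, mul_comm]
    -- assemble
    refine ⟨!![1, 0; 2 * (α : ℂ) * I, 1] *
        !![Complex.exp (((R : ℂ) + (Real.pi : ℂ) * I) * (-(1:ℂ)/4)), 0;
           0, Complex.exp (((R : ℂ) + (Real.pi : ℂ) * I) * ((1:ℂ)/4))] * Vmat *
        !![wp ^ (-(α:ℂ)), 0; 0, wp ^ ((α:ℂ))],
      !![1, 0; 2 * (α : ℂ) * I, 1] *
        !![Complex.exp (((R : ℂ) - (Real.pi : ℂ) * I) * (-(1:ℂ)/4)), 0;
           0, Complex.exp (((R : ℂ) - (Real.pi : ℂ) * I) * ((1:ℂ)/4))] * Vmat *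
        !![wm ^ (-(α:ℂ)), 0; 0, wm ^ ((α:ℂ))], ?_, ?_, ?_⟩
    · simp only [Pinf]
      exact ((tendsto_const_nhds.mul (tendsto_diag (hdP _) (hdP _))).mul
        tendsto_const_nhds).mul (tendsto_diag (hwaP _) (hwaP _))
    · simp only [Pinf]
      exact ((tendsto_const_nhds.mul (tendsto_diag (hdM _) (hdM _))).mul
        tendsto_const_nhds).mul (tendsto_diag (hwaM _) (hwaM _))
    · rw [hed1, hed2, ← hswap1, ← hswap2]
      exact key2 _ _ _ _ _
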